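/- The restriction of φ_0 to the complement of the diagonal, φ_0 : (P^n × P^n) \ Δ → P(Sym^3(W)), is an isomorphism onto its image; in particular its differential is injective at every point with [λ] ≠ [μ]. -/

import Mathlib

open MvPolynomial

section Aux

variable {k : Type*} [Field k] {N : ℕ}

/-- Linear functional given by a coefficient vector. -/
noncomputable def lfAux (w : Fin N → k) : (Fin N → k) →ₗ[k] k where
  toFun x := ∑ i, w i * x i
  map_add' x y := by simp [mul_add, Finset.sum_add_distrib]
  map_smul' a x := by simp [Finset.mul_sum, mul_left_comm]

lemma single_of_degree_one {σ : Type*} {d : σ →₀ ℕ} (hd : d.degree = 1) :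
    ∃ i, d = Finsupp.single i 1 := by
  classical
  have hne : d ≠ 0 := by
    intro h0
    rw [h0, map_zero] at hd
    omega
  obtain ⟨i, hi⟩ := Finsupp.support_nonempty_iff.2 hne
  have hi' : d i ≠ 0 := Finsupp.mem_support_iff.1 hi
  have hdi : d i ≤ 1 := by rw [← hd]; exact Finsupp.le_degree i d
  have hdi1 : d i = 1 := by omega
  refine ⟨i, ?_⟩
  ext j
  rw [Finsupp.single_apply]
  by_cases hji : i = j
  · subst hji; simp [hdi1]
  · rw [if_neg hji]
    by_contra hdj
    have hjmem : j ∈ d.support := Finsupp.mem_support_iff.2 hdj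
    have hsub : ({i, j} : Finset σ) ⊆ d.support := by
      intro x hx
      rcases Finset.mem_insert.1 hx with rfl | hx
      · exact hi
      · rw [Finset.mem_singleton.1 hx]; exact hjmem
    have hsum : ∑ x ∈ ({i,j} : Finset σ), d x ≤ ∑ x ∈ d.support, d x :=
      Finset.sum_le_sum_of_subset hsub
    rw [Finset.sum_insert (by simp [hji]), Finset.sum_singleton] at hsum
    have hdeg : d.degree = ∑ x ∈ d.support, d x := rfl
    omega

lemma rep_of_isHomogeneous_one {p : MvPolynomial (Fin N) k} (hp : p.IsHomogeneous 1) :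
    p = ∑ i, C (coeff (Finsupp.single i 1) p) * X i := by
  classical
  ext d
  rw [coeff_sum]
  simp only [coeff_C_mul, coeff_X']
  by_cases hd : ∃ i, d = Finsupp.single i 1
  · obtain ⟨i, rfl⟩ := hd
    rw [Finset.sum_eq_single i]
    · simp
    · intro j _ hji
      have : Finsupp.single j 1 ≠ Finsupp.single i 1 := by
        intro h
        exact hji (Finsupp.single_left_injective one_ne_zero h)
      simp [this]
    · simp
  · have hcd : coeff d p = 0 := by
      by_contra hc
      have : d.degree = 1 := by
        rw [Finsupp.degree_eq_weight_one]; exact hp hc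
      exact hd (single_of_degree_one this)
    rw [hcd]
    symm
    apply Finset.sum_eq_zero
    intro j _
    have : Finsupp.single j 1 ≠ d := fun h => hd ⟨j, h.symm⟩
    simp [this]

lemma eval_rep {p : MvPolynomial (Fin N) k} (hp : p.IsHomogeneous 1) (x : Fin N → k) :
    eval x p = lfAux (fun i => coeff (Finsupp.single i 1) p) x := by
  conv_lhs => rw [rep_of_isHomogeneous_one hp]
  simp [lfAux]

lemma eq_C_mul_of_forall_eval [Infinite k] {p q : MvPolynomial (Fin N) k}
    (hp : p.IsHomogeneous 1) (hq : q.IsHomogeneous 1) (a : k)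
    (hfun : ∀ x, eval x p = a * eval x q) : p = C a * q := by
  have h2 : (C a * q : MvPolynomial (Fin N) k).IsHomogeneous 1 := by
    simpa using (isHomogeneous_C (Fin N) a).mul hq
  exact MvPolynomial.IsHomogeneous.funext hp h2 (fun x => by simp [hfun x])

end Aux

/-- The restriction of `φ₀ : ([λ],[μ]) ↦ [λμ²]` to the
complement of the diagonal is an immersion: at any point with `[λ] ≠ [μ]`, the
differential of `φ₀` is injective.  Concretely, a tangent vector at
`([λ],[μ])` is a pair of linear forms `(α, β)`, the differential sends it to
`αμ² + 2λμβ`, and this lies in the line spanned by `λμ²` (i.e. is a tangent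
vector along the fibers of the projectivization) only if `α ∈ ⟨λ⟩` and
`β ∈ ⟨μ⟩`. -/
theorem phi0_differential_injective_off_diagonal {k : Type*} [Field k] [IsAlgClosed k]
    (hchar : ringChar k = 0 ∨ 3 < ringChar k) (n : ℕ) (hn : 2 ≤ n)
    (l m α β : MvPolynomial (Fin (n + 1)) k)
    (hl : l.IsHomogeneous 1) (hm : m.IsHomogeneous 1)
    (hα : α.IsHomogeneous 1) (hβ : β.IsHomogeneous 1)
    (hl0 : l ≠ 0) (hm0 : m ≠ 0)
    (hne : ∀ a : k, m ≠ C a * l)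
    (c : k) (h : α * m ^ 2 + 2 * (l * m * β) = C c * (l * m ^ 2)) :
    (∃ a : k, α = C a * l) ∧ ∃ b : k, β = C b * m := by
  classical
  have two_ne : (2 : k) ≠ 0 := by
    intro h20
    have hdvd : ringChar k ∣ 2 := ringChar.dvd (by exact_mod_cast h20)
    rcases hchar with h0 | h3
    · rw [h0] at hdvd; exact (by norm_num : ¬ (0 : ℕ) ∣ 2) hdvd
    · have := Nat.le_of_dvd (by norm_num) hdvd
      omega
  -- cancel m
  have h2 : α * m + 2 * (l * β) = C c * (l * m) :=
    mul_left_cancel₀ hm0 (by ring_nf; linear_combination h)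
  -- linear functionals
  set L : (Fin (n+1) → k) →ₗ[k] k := lfAux (fun i => coeff (Finsupp.single i 1) l) with hL
  set M : (Fin (n+1) → k) →ₗ[k] k := lfAux (fun i => coeff (Finsupp.single i 1) m) with hM
  set A : (Fin (n+1) → k) →ₗ[k] k := lfAux (fun i => coeff (Finsupp.single i 1) α) with hA
  set B : (Fin (n+1) → k) →ₗ[k] k := lfAux (fun i => coeff (Finsupp.single i 1) β) with hB
  have hLl : ∀ x, eval x l = L x := fun x => eval_rep hl x
  have hMm : ∀ x, eval x m = M x := fun x => eval_rep hm x
  have hAα : ∀ x, eval x α = A x := fun x => eval_rep hα x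
  have hBβ : ∀ x, eval x β = B x := fun x => eval_rep hβ x
  have h3 : ∀ x : Fin (n+1) → k, A x * M x + 2 * (L x * B x) = c * (L x * M x) := by
    intro x
    have := congrArg (eval x) h2
    simp only [map_add, map_mul, eval_C, map_ofNat] at this
    rw [hLl, hMm, hAα, hBβ] at this
    exact this
  -- span helper
  have span_lemma : ∀ (F G : (Fin (n+1) → k) →ₗ[k] k),
      LinearMap.ker F ≤ LinearMap.ker G → ∃ a : k, G = a • F := by
    intro F G hle
    have hmem : G ∈ Submodule.span k (Set.range (fun _ : Unit => F)) :=
      mem_span_of_iInf_ker_le_ker (by simpa using hle)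
    rw [Set.range_const, Submodule.mem_span_singleton] at hmem
    obtain ⟨a, ha⟩ := hmem
    exact ⟨a, ha.symm⟩
  -- ker M not ≤ ker L
  have hkerML : ¬ (LinearMap.ker M ≤ LinearMap.ker L) := by
    intro hle
    obtain ⟨a, ha⟩ := span_lemma M L hle
    rcases eq_or_ne a 0 with rfl | ha0
    · have hL0 : ∀ x, eval x l = 0 := by
        intro x
        rw [hLl, ha]; simp
      exact hl0 (hl.eq_zero_of_forall_eval_eq_zero hL0)
    · have : m = C a⁻¹ * l := by
        apply eq_C_mul_of_forall_eval hm hl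
        intro x
        rw [hMm, hLl, ha]
        simp only [LinearMap.smul_apply, smul_eq_mul]
        field_simp
      exact hne a⁻¹ this
  obtain ⟨x₀, hx₀M, hx₀L⟩ : ∃ x, M x = 0 ∧ L x ≠ 0 := by
    rw [SetLike.not_le_iff_exists] at hkerML
    obtain ⟨x, hx1, hx2⟩ := hkerML
    exact ⟨x, hx1, hx2⟩
  -- L z * B z = 0 on ker M
  have key : ∀ z, M z = 0 → L z * B z = 0 := by
    intro z hz
    have := h3 z
    rw [hz] at this
    simp only [mul_zero, zero_add] at this
    exact (mul_eq_zero.1 this).resolve_left two_ne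
  have hBx₀ : B x₀ = 0 := (mul_eq_zero.1 (key x₀ hx₀M)).resolve_left hx₀L
  have hkerMB : LinearMap.ker M ≤ LinearMap.ker B := by
    intro y hy
    rw [LinearMap.mem_ker] at hy ⊢
    set t : k := (1 - L y) / L x₀ with ht
    have hMz : M (y + t • x₀) = 0 := by
      rw [map_add, map_smul, hy, hx₀M]; simp
    have hLz : L (y + t • x₀) = 1 := by
      rw [map_add, map_smul, ht]
      rw [smul_eq_mul, div_mul_cancel₀ _ hx₀L]; ring
    have hz := key _ hMz
    rw [hLz, one_mul, map_add, map_smul, hBx₀] at hz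
    simpa using hz
  obtain ⟨b, hb⟩ := span_lemma M B hkerMB
  have hβm : β = C b * m := by
    apply eq_C_mul_of_forall_eval hβ hm
    intro x
    rw [hBβ, hMm, hb]
    simp
  refine ⟨⟨c - 2 * b, ?_⟩, ⟨b, hβm⟩⟩
  have hC2 : (C (c - 2 * b) : MvPolynomial (Fin (n+1)) k) = C c - 2 * C b := by
    rw [map_sub, map_mul, map_ofNat]
  apply mul_left_cancel₀ hm0
  rw [hC2]
  linear_combination h2 - 2 * l * hβm
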